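/- Let n ≥ 2 and let a = (a_1,…,a_n), b = (b_1,…,b_n) be tuples of integers such that for some i with 1 ≤ i ≤ n−1 one has a_{i+1} = a_i − 1 and b_{i+1} = b_i − 1. Then Σ'_{l_1=a_1..b_1} Σ'_{l_2=a_2..b_2} ⋯ Σ'_{l_n=a_n..b_n} sgt(l_1,…,l_n) = 0. -/

import Mathlib

/-- The signed sum `Σ'_{l=a..b} f(l)`: the ordinary sum over `[a,b]` when `a ≤ b`,
and `-Σ_{l=b+1}^{a-1} f(l)` when `a > b`. -/
noncomputable def ssum (a b : ℤ) (f : ℤ → ℤ) : ℤ :=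
  if a ≤ b then ∑ l ∈ Finset.Icc a b, f l else -∑ l ∈ Finset.Icc (b + 1) (a - 1), f l

/-- Iterated signed sum over the box `[a 0, b 0] × ⋯ × [a (m-1), b (m-1)]`,
one signed sum per coordinate. -/
noncomputable def sbox : (m : ℕ) → (Fin m → ℤ) → (Fin m → ℤ) → ((Fin m → ℤ) → ℤ) → ℤ
  | 0, _, _, f => f Fin.elim0
  | m + 1, a, b, f =>
      ssum (a 0) (b 0) fun l =>
        sbox m (fun i => a i.succ) (fun i => b i.succ) fun t => f (Fin.cons l t)

/-- The signed Gelfand–Tsetlin count: `sgt k = 1` for tuples of length `≤ 1`, and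
`sgt (k_1,…,k_n) = Σ'_{l_1=k_1..k_2} ⋯ Σ'_{l_{n-1}=k_{n-1}..k_n} sgt (l_1,…,l_{n-1})`. -/
noncomputable def sgt : (n : ℕ) → (Fin n → ℤ) → ℤ
  | 0, _ => 1
  | 1, _ => 1
  | n + 2, k => sbox (n + 1) (fun i => k i.castSucc) (fun i => k i.succ) (sgt (n + 1))

/-- Antisymmetric interval sum. -/
noncomputable def D (a b : ℤ) (f : ℤ → ℤ) : ℤ :=
  if a ≤ b then ∑ l ∈ Finset.Ioc a b, f l else -∑ l ∈ Finset.Ioc b a, f l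

theorem D_congr {a b : ℤ} {f g : ℤ → ℤ} (h : ∀ x, f x = g x) : D a b f = D a b g :=
  congrArg (D a b) (funext h)

theorem D_neg (a b : ℤ) (f : ℤ → ℤ) : D a b (fun x => -f x) = -D a b f := by
  unfold D; split <;> simp

theorem D_add (a b : ℤ) (f g : ℤ → ℤ) :
    D a b (fun x => f x + g x) = D a b f + D a b g := by
  unfold D; split <;> simp [Finset.sum_add_distrib] <;> ring

theorem D_zero (a b : ℤ) : D a b (fun _ => (0:ℤ)) = 0 := by
  unfold D; split <;> simp

theorem D_antisymm (a b : ℤ) (f : ℤ → ℤ) : D a b f = -D b a f := by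
  unfold D
  rcases le_total a b with h | h
  · rcases lt_or_eq_of_le h with h' | rfl
    · rw [if_pos h, if_neg (not_le.mpr h'), neg_neg]
    · simp
  · rcases lt_or_eq_of_le h with h' | rfl
    · rw [if_neg (not_le.mpr h'), if_pos h]
    · simp

theorem D_sorted {a b c : ℤ} (f : ℤ → ℤ) (h1 : a ≤ b) (h2 : b ≤ c) :
    D a b f + D b c f = D a c f := by
  unfold D
  rw [if_pos h1, if_pos h2, if_pos (h1.trans h2)]
  rw [← Finset.Ioc_union_Ioc_eq_Ioc h1 h2,
    Finset.sum_union (by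
      rw [Finset.disjoint_left]; intro x hx hy
      simp only [Finset.mem_Ioc] at hx hy; omega)]

theorem D_chasles (a b c : ℤ) (f : ℤ → ℤ) : D a b f + D b c f = D a c f := by
  have A1 := D_antisymm a b f
  have A2 := D_antisymm b c f
  have A3 := D_antisymm a c f
  rcases le_total a b with h1 | h1 <;> rcases le_total b c with h2 | h2 <;>
    rcases le_total a c with h3 | h3
  · exact D_sorted f h1 h2
  · exact D_sorted f h1 h2
  · have := D_sorted f h3 h2; linarith
  · have := D_sorted f h3 h1; linarith
  · have := D_sorted f h1 h3; linarith
  · have := D_sorted f h2 h3; linarith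
  · have := D_sorted f h2 h1; linarith
  · have := D_sorted f h2 h1; linarith

theorem D_comm (a b c d : ℤ) (F : ℤ → ℤ → ℤ) :
    D a b (fun x => D c d (fun y => F x y)) = D c d (fun y => D a b (fun x => F x y)) := by
  unfold D
  by_cases h1 : a ≤ b <;> by_cases h2 : c ≤ d <;>
    simp only [if_pos, if_neg, h1, h2, if_true, if_false, Finset.sum_neg_distrib, neg_neg] <;>
    rw [Finset.sum_comm]

theorem D_shift (a b : ℤ) (f : ℤ → ℤ) :
    D (a - 1) (b - 1) f = D a b (fun x => f (x - 1)) := by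
  have key : ∀ u v : ℤ, ∑ l ∈ Finset.Ioc u v, f (l - 1) = ∑ l ∈ Finset.Ioc (u-1) (v-1), f l := by
    intro u v
    have : Finset.Ioc (u-1) (v-1) = (Finset.Ioc u v).map (addRightEmbedding (-1)) := by
      rw [Finset.map_add_right_Ioc]; congr 1 <;> ring
    rw [this, Finset.sum_map]
    simp [addRightEmbedding]
    rfl
  unfold D
  have : a - 1 ≤ b - 1 ↔ a ≤ b := by omega
  by_cases h : a ≤ b
  · rw [if_pos h, if_pos (this.mpr h), key]
  · rw [if_neg h, if_neg (fun hh => h (this.mp hh)), key]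

theorem D_one (a b : ℤ) : D a b (fun _ => (1:ℤ)) = b - a := by
  unfold D
  split <;> rename_i h <;> simp [Int.card_Ioc] <;> omega

theorem ssum_eq_D (a b : ℤ) (f : ℤ → ℤ) : ssum a b f = D (a - 1) b f := by
  unfold ssum D
  by_cases h : a ≤ b
  · rw [if_pos h, if_pos (by omega : a - 1 ≤ b)]
    apply Finset.sum_congr _ (fun _ _ => rfl)
    ext x; simp
  · rw [if_neg h]
    by_cases h2 : a - 1 ≤ b
    · have : a = b + 1 := by omega
      subst this; simp
    · rw [if_neg h2]
      congr 1
      apply Finset.sum_congr _ (fun _ _ => rfl)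
      ext x; simp

theorem Kzero (A B : ℤ) (F : ℤ → ℤ → ℤ) (h : ∀ a b, F a b = -F (b + 1) (a - 1)) :
    D A B (fun a => D (A - 1) (B - 1) (fun b => F a b)) = 0 := by
  have e1 : D A B (fun a => D (A - 1) (B - 1) (fun b => F a b))
      = D A B (fun a => D A B (fun y => F a (y - 1))) :=
    D_congr (fun a => D_shift A B (fun b => F a b))
  set S := D A B (fun a => D A B (fun y => F a (y - 1))) with hS
  have e2 : S = -S := by
    calc S = D A B (fun y => D A B (fun a => F a (y - 1))) := D_comm A B A B _
    _ = D A B (fun y => D A B (fun a => -F y (a - 1))) := by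
        apply D_congr; intro y; apply D_congr; intro a
        have := h a (y - 1); simpa using this
    _ = D A B (fun y => -D A B (fun a => F y (a - 1))) := D_congr (fun y => D_neg A B _)
    _ = -S := D_neg A B _
  have : S = 0 := by omega
  rw [e1, this]

theorem PAIRLAST (p x y : ℤ) (R : ℤ → ℤ → ℤ) (h : ∀ a b, R a b = -R (b + 1) (a - 1)) :
    D p x (fun u => D (x - 1) y (fun v => R u v))
      + D p (y + 1) (fun u => D y (x - 1) (fun v => R u v)) = 0 := by
  have e1 : D p (y + 1) (fun u => D y (x - 1) (fun v => R u v))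
      = -D p (y + 1) (fun u => D (x - 1) y (fun v => R u v)) := by
    rw [← D_neg]; exact D_congr (fun u => D_antisymm y (x - 1) _)
  have e2 := D_chasles p x (y + 1) (fun u => D (x - 1) y (fun v => R u v))
  have e3 : D x (y + 1) (fun u => D (x - 1) y (fun v => R u v)) = 0 := by
    have := Kzero x (y + 1) R h
    simpa using this
  linarith

theorem PAIRFRONT (x y q : ℤ) (R : ℤ → ℤ → ℤ) (h : ∀ a b, R a b = -R (b + 1) (a - 1)) :
    D (x - 1) y (fun a => D (y - 1) q (fun b => R a b))
      + D y (x - 1) (fun a => D (x - 2) q (fun b => R a b)) = 0 := by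
  have e1 : D y (x - 1) (fun a => D (x - 2) q (fun b => R a b))
      = -D (x - 1) y (fun a => D (x - 2) q (fun b => R a b)) := D_antisymm _ _ _
  have e2 : D (x - 1) y (fun a => D (x - 2) q (fun b => R a b))
      = D (x - 1) y (fun a => D (x - 2) (y - 1) (fun b => R a b))
        + D (x - 1) y (fun a => D (y - 1) q (fun b => R a b)) := by
    rw [← D_add]
    exact D_congr (fun a => (D_chasles (x - 2) (y - 1) q _).symm)
  have e3 : D (x - 1) y (fun a => D (x - 2) (y - 1) (fun b => R a b)) = 0 := by
    have := Kzero (x - 1) y R h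
    have eq : (x : ℤ) - 1 - 1 = x - 2 := by ring
    rw [eq] at this
    exact this
  linarith

theorem TRIPLE (p x y w : ℤ) (R : ℤ → ℤ → ℤ → ℤ)
    (h12 : ∀ a b c, R a b c = -R (b + 1) (a - 1) c)
    (h23 : ∀ a b c, R a b c = -R a (c + 1) (b - 1)) :
    D p x (fun u => D (x - 1) y (fun v => D (y - 1) w (fun z => R u v z)))
      + D p (y + 1) (fun u => D y (x - 1) (fun v => D (x - 2) w (fun z => R u v z))) = 0 := by
  -- inner (v,z) square vanishing
  have inner0 : ∀ u, D (x - 1) y (fun v => D (x - 2) (y - 1) (fun z => R u v z)) = 0 := by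
    intro u
    have := Kzero (x - 1) y (fun v z => R u v z) (fun a b => h23 u a b)
    have eq : (x : ℤ) - 1 - 1 = x - 2 := by ring
    rw [eq] at this
    exact this
  have e1 : D p (y + 1) (fun u => D y (x - 1) (fun v => D (x - 2) w (fun z => R u v z)))
      = -D p (y + 1) (fun u => D (x - 1) y (fun v => D (y - 1) w (fun z => R u v z))) := by
    rw [← D_neg]
    apply D_congr; intro u
    have s1 : D y (x - 1) (fun v => D (x - 2) w (fun z => R u v z))
        = -D (x - 1) y (fun v => D (x - 2) w (fun z => R u v z)) := D_antisymm _ _ _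
    have s2 : D (x - 1) y (fun v => D (x - 2) w (fun z => R u v z))
        = D (x - 1) y (fun v => D (x - 2) (y - 1) (fun z => R u v z))
          + D (x - 1) y (fun v => D (y - 1) w (fun z => R u v z)) := by
      rw [← D_add]
      exact D_congr (fun v => (D_chasles (x - 2) (y - 1) w _).symm)
    rw [s1, s2, inner0 u]; ring
  have e2 := D_chasles p x (y + 1)
    (fun u => D (x - 1) y (fun v => D (y - 1) w (fun z => R u v z)))
  have e3 : D x (y + 1) (fun u => D (x - 1) y (fun v => D (y - 1) w (fun z => R u v z))) = 0 := by
    have := Kzero x (y + 1) (fun u v => D (y - 1) w (fun z => R u v z)) (fun a b => by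
      rw [← D_neg]
      exact D_congr (fun z => h12 a b z))
    simpa using this
  linarith

theorem ssum_congr {a b : ℤ} {f g : ℤ → ℤ} (h : ∀ x, f x = g x) : ssum a b f = ssum a b g :=
  congrArg (ssum a b) (funext h)

theorem ssum_neg (a b : ℤ) (f : ℤ → ℤ) : ssum a b (fun x => -f x) = -ssum a b f := by
  rw [ssum_eq_D, ssum_eq_D, D_neg]

theorem ssum_add (a b : ℤ) (f g : ℤ → ℤ) :
    ssum a b (fun x => f x + g x) = ssum a b f + ssum a b g := by
  rw [ssum_eq_D, ssum_eq_D, ssum_eq_D, D_add]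

theorem ssum_zero (a b : ℤ) : ssum a b (fun _ => (0:ℤ)) = 0 := by
  rw [ssum_eq_D, D_zero]

/-- Iterated signed sum over a list of interval bounds. -/
noncomputable def bsum : List (ℤ × ℤ) → (List ℤ → ℤ) → ℤ
  | [], f => f []
  | (a, b) :: r, f => ssum a b fun l => bsum r fun t => f (l :: t)

theorem bsum_congr : ∀ (ps : List (ℤ × ℤ)) {f g : List ℤ → ℤ},
    (∀ t, t.length = ps.length → f t = g t) → bsum ps f = bsum ps g
  | [], f, g, h => h [] rfl
  | (a, b) :: r, f, g, h => by
    show ssum a b _ = ssum a b _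
    exact ssum_congr fun l => bsum_congr r fun t ht => h (l :: t) (by simp [ht])

theorem bsum_zero : ∀ (ps : List (ℤ × ℤ)) {f : List ℤ → ℤ},
    (∀ t, t.length = ps.length → f t = 0) → bsum ps f = 0
  | [], f, h => h [] rfl
  | (a, b) :: r, f, h => by
    show ssum a b _ = 0
    rw [ssum_congr fun l => bsum_zero r fun t ht => h (l :: t) (by simp [ht])]
    exact ssum_zero a b

theorem bsum_neg : ∀ (ps : List (ℤ × ℤ)) (f : List ℤ → ℤ),
    bsum ps (fun t => -f t) = -bsum ps f
  | [], f => rfl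
  | (a, b) :: r, f => by
    show ssum a b _ = -ssum a b _
    rw [← ssum_neg]
    exact ssum_congr fun l => bsum_neg r _

theorem bsum_add : ∀ (ps : List (ℤ × ℤ)) (f g : List ℤ → ℤ),
    bsum ps (fun t => f t + g t) = bsum ps f + bsum ps g
  | [], f, g => rfl
  | (a, b) :: r, f, g => by
    show ssum a b _ = ssum a b _ + ssum a b _
    rw [← ssum_add]
    exact ssum_congr fun l => bsum_add r _ _

theorem bsum_append : ∀ (ps qs : List (ℤ × ℤ)) (f : List ℤ → ℤ),
    bsum (ps ++ qs) f = bsum ps (fun u => bsum qs (fun v => f (u ++ v)))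
  | [], qs, f => rfl
  | (a, b) :: r, qs, f => by
    show ssum a b _ = ssum a b _
    exact ssum_congr fun l => bsum_append r qs _

theorem bsum_cons (a b : ℤ) (r : List (ℤ × ℤ)) (f : List ℤ → ℤ) :
    bsum ((a, b) :: r) f = D (a - 1) b (fun l => bsum r (fun t => f (l :: t))) :=
  ssum_eq_D a b _

/-- Consecutive-pairs list of a list. -/
def zp : List ℤ → List (ℤ × ℤ)
  | [] => []
  | [_] => []
  | a :: b :: r => (a, b) :: zp (b :: r)

theorem zp_length : ∀ K : List ℤ, (zp K).length = K.length - 1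
  | [] => rfl
  | [_] => rfl
  | a :: b :: r => by simp [zp, zp_length (b :: r)]

theorem zp_append_cons : ∀ (s : List ℤ) (a : ℤ) (t : List ℤ),
    zp (s ++ a :: t) = zp (s ++ [a]) ++ zp (a :: t)
  | [], a, t => rfl
  | [c], a, t => by simp [zp]
  | c :: e :: s', a, t => by
    have := zp_append_cons (e :: s') a t
    simp only [List.cons_append, zp, List.append_eq] at *
    rw [this]

/-- `sgtA n K` : list version of `sgt` (for `K` of length `n`). -/
noncomputable def sgtA : ℕ → List ℤ → ℤ
  | 0, _ => 1
  | 1, _ => 1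
  | n + 2, K => bsum (zp K) (sgtA (n + 1))

theorem T0 (Q : List (ℤ × ℤ)) (f : List ℤ → ℤ) (x y w : ℤ)
    (h : ∀ a b β, β.length = Q.length → f (a :: b :: β) = -f ((b + 1) :: (a - 1) :: β)) :
    bsum ((x, y) :: (y, w) :: Q) f + bsum ((y + 1, x - 1) :: (x - 1, w) :: Q) f = 0 := by
  set R : ℤ → ℤ → ℤ := fun a b => bsum Q (fun t => f (a :: b :: t)) with hR
  have hanti : ∀ a b, R a b = -R (b + 1) (a - 1) := by
    intro a b
    rw [hR]; dsimp only
    rw [← bsum_neg]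
    exact bsum_congr Q fun t ht => h a b t ht
  have e1 : bsum ((x, y) :: (y, w) :: Q) f
      = D (x - 1) y (fun a => D (y - 1) w (fun b => R a b)) := by
    rw [bsum_cons]
    exact D_congr fun a => bsum_cons y w Q _
  have e2 : bsum ((y + 1, x - 1) :: (x - 1, w) :: Q) f
      = D y (x - 1) (fun a => D (x - 2) w (fun b => R a b)) := by
    rw [bsum_cons]
    have n1 : (y : ℤ) + 1 - 1 = y := by ring
    rw [n1]
    refine D_congr fun a => ?_
    rw [bsum_cons]
    have n2 : (x : ℤ) - 1 - 1 = x - 2 := by ring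
    rw [n2]
  rw [e1, e2]
  exact PAIRFRONT x y w R hanti

theorem Tlast (P : List (ℤ × ℤ)) (f : List ℤ → ℤ) (p x y : ℤ)
    (h : ∀ α a b, α.length = P.length → f (α ++ [a, b]) = -f (α ++ [b + 1, a - 1])) :
    bsum (P ++ [(p, x), (x, y)]) f + bsum (P ++ [(p, y + 1), (y + 1, x - 1)]) f = 0 := by
  rw [bsum_append, bsum_append, ← bsum_add]
  apply bsum_zero
  intro α hα
  set R : ℤ → ℤ → ℤ := fun u v => f (α ++ [u, v]) with hRdef
  have hanti : ∀ a b, R a b = -R (b + 1) (a - 1) := fun a b => h α a b hα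
  have e1 : bsum [(p, x), (x, y)] (fun v => f (α ++ v))
      = D (p - 1) x (fun u => D (x - 1) y (fun v => R u v)) := by
    rw [bsum_cons]
    exact D_congr fun u => bsum_cons x y [] _
  have e2 : bsum [(p, y + 1), (y + 1, x - 1)] (fun v => f (α ++ v))
      = D (p - 1) (y + 1) (fun u => D y (x - 1) (fun v => R u v)) := by
    rw [bsum_cons]
    refine D_congr fun u => ?_
    rw [bsum_cons]
    have n1 : (y : ℤ) + 1 - 1 = y := by ring
    rw [n1]
    rfl
  rw [e1, e2]
  exact PAIRLAST (p - 1) x y R hanti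

theorem Tmid (P Q : List (ℤ × ℤ)) (f : List ℤ → ℤ) (p x y w : ℤ)
    (h1 : ∀ α a b β, α.length = P.length → β.length = Q.length + 1 →
      f (α ++ a :: b :: β) = -f (α ++ (b + 1) :: (a - 1) :: β))
    (h2 : ∀ α a b β, α.length = P.length + 1 → β.length = Q.length →
      f (α ++ a :: b :: β) = -f (α ++ (b + 1) :: (a - 1) :: β)) :
    bsum (P ++ (p, x) :: (x, y) :: (y, w) :: Q) f
      + bsum (P ++ (p, y + 1) :: (y + 1, x - 1) :: (x - 1, w) :: Q) f = 0 := by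
  rw [bsum_append, bsum_append, ← bsum_add]
  apply bsum_zero
  intro α hα
  set R : ℤ → ℤ → ℤ → ℤ := fun u v z => bsum Q (fun t => f (α ++ u :: v :: z :: t)) with hRdef
  have h12 : ∀ a b c, R a b c = -R (b + 1) (a - 1) c := by
    intro a b c
    rw [hRdef]; dsimp only
    rw [← bsum_neg]
    exact bsum_congr Q fun t ht => h1 α a b (c :: t) hα (by simp [ht])
  have h23 : ∀ a b c, R a b c = -R a (c + 1) (b - 1) := by
    intro a b c
    rw [hRdef]; dsimp only
    rw [← bsum_neg]
    refine bsum_congr Q fun t ht => ?_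
    have := h2 (α ++ [a]) b c t (by simp [hα]) ht
    simpa using this
  have e1 : bsum ((p, x) :: (x, y) :: (y, w) :: Q) (fun v => f (α ++ v))
      = D (p - 1) x (fun u => D (x - 1) y (fun v => D (y - 1) w (fun z => R u v z))) := by
    rw [bsum_cons]
    refine D_congr fun u => ?_
    rw [bsum_cons]
    refine D_congr fun v => ?_
    rw [bsum_cons]
  have e2 : bsum ((p, y + 1) :: (y + 1, x - 1) :: (x - 1, w) :: Q) (fun v => f (α ++ v))
      = D (p - 1) (y + 1) (fun u => D y (x - 1) (fun v => D (x - 2) w (fun z => R u v z))) := by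
    rw [bsum_cons]
    refine D_congr fun u => ?_
    rw [bsum_cons]
    have n1 : (y : ℤ) + 1 - 1 = y := by ring
    rw [n1]
    refine D_congr fun v => ?_
    rw [bsum_cons]
    have n2 : (x : ℤ) - 1 - 1 = x - 2 := by ring
    rw [n2]
  rw [e1, e2]
  exact TRIPLE (p - 1) x y w R h12 h23

theorem sgtA_two (x y : ℤ) : sgtA 2 [x, y] = y - x + 1 := by
  show bsum (zp [x, y]) (sgtA 1) = _
  rw [show zp [x, y] = [(x, y)] from rfl, bsum_cons]
  show D (x - 1) y (fun _ => (1:ℤ)) = _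
  rw [D_one]
  ring

theorem sgtA_swap : ∀ (n : ℕ) (u v : List ℤ) (x y : ℤ), u.length + v.length = n →
    sgtA (n + 2) (u ++ x :: y :: v) = -sgtA (n + 2) (u ++ (y + 1) :: (x - 1) :: v) := by
  intro n
  induction n with
  | zero =>
    intro u v x y hlen
    have hu : u = [] := by
      cases u with
      | nil => rfl
      | cons a t => simp at hlen
    have hv : v = [] := by
      cases v with
      | nil => rfl
      | cons a t => rw [hu] at hlen; simp at hlen
    subst hu; subst hv
    simp only [List.nil_append]
    rw [sgtA_two, sgtA_two]
    ring
  | succ m IH =>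
    intro u v x y hlen
    rcases u.eq_nil_or_concat with rfl | ⟨u₀, p, hu⟩
    · -- u = []
      obtain ⟨w, v', rfl⟩ : ∃ w v', v = w :: v' := by
        cases v with
        | nil => simp at hlen
        | cons a t => exact ⟨a, t, rfl⟩
      simp only [List.nil_append]
      have hlen' : v'.length = m := by simp at hlen; omega
      have key := T0 (zp (w :: v')) (sgtA (m + 2)) x y w (fun a b β hβ => by
        have hβ' : β.length = v'.length := by
          rw [hβ, zp_length]; simp
        exact IH [] β a b (by simp [hβ', hlen']))
      have z1 : sgtA (m + 1 + 2) (x :: y :: w :: v')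
          = bsum ((x, y) :: (y, w) :: zp (w :: v')) (sgtA (m + 2)) := rfl
      have z2 : sgtA (m + 1 + 2) ((y + 1) :: (x - 1) :: w :: v')
          = bsum ((y + 1, x - 1) :: (x - 1, w) :: zp (w :: v')) (sgtA (m + 2)) := rfl
      rw [z1, z2]
      linarith [key]
    · -- u = u₀ ++ [p]
      rw [List.concat_eq_append] at hu
      subst hu
      have hx1 : ∀ c : ℤ, zp ((u₀ ++ [p]) ++ [c]) = zp (u₀ ++ [p]) ++ [(p, c)] := by
        intro c
        rw [show (u₀ ++ [p]) ++ [c] = u₀ ++ p :: [c] by simp, zp_append_cons u₀ p [c]]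
        rfl
      have hzl : (zp (u₀ ++ [p])).length = u₀.length := by
        rw [zp_length]; simp
      rcases v with _ | ⟨w, v'⟩
      · -- v = []
        have hm : u₀.length = m := by simp at hlen; omega
        have key := Tlast (zp (u₀ ++ [p])) (sgtA (m + 2)) p x y (fun α a b hα => by
          have l1 : α.length = u₀.length := by rw [hα, hzl]
          exact IH α [] a b (by simp only [List.length_nil]; omega))
        have z1 : sgtA (m + 1 + 2) ((u₀ ++ [p]) ++ [x, y])
            = bsum (zp (u₀ ++ [p]) ++ [(p, x), (x, y)]) (sgtA (m + 2)) := by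
          have : zp ((u₀ ++ [p]) ++ [x, y]) = zp (u₀ ++ [p]) ++ [(p, x), (x, y)] := by
            rw [show ((u₀ ++ [p]) ++ [x, y] : List ℤ) = (u₀ ++ [p]) ++ x :: [y] from rfl,
              zp_append_cons (u₀ ++ [p]) x [y], hx1 x]
            simp [zp]
          show bsum (zp ((u₀ ++ [p]) ++ [x, y])) (sgtA (m + 2)) = _
          rw [this]
        have z2 : sgtA (m + 1 + 2) ((u₀ ++ [p]) ++ [y + 1, x - 1])
            = bsum (zp (u₀ ++ [p]) ++ [(p, y + 1), (y + 1, x - 1)]) (sgtA (m + 2)) := by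
          have : zp ((u₀ ++ [p]) ++ [y + 1, x - 1])
              = zp (u₀ ++ [p]) ++ [(p, y + 1), (y + 1, x - 1)] := by
            rw [show ((u₀ ++ [p]) ++ [y + 1, x - 1] : List ℤ)
                = (u₀ ++ [p]) ++ (y + 1) :: [x - 1] from rfl,
              zp_append_cons (u₀ ++ [p]) (y + 1) [x - 1], hx1 (y + 1)]
            simp [zp]
          show bsum (zp ((u₀ ++ [p]) ++ [y + 1, x - 1])) (sgtA (m + 2)) = _
          rw [this]
        rw [z1, z2]
        linarith [key]
      · -- v = w :: v'
        have hm : u₀.length + v'.length + 1 = m := by simp at hlen; omega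
        have key := Tmid (zp (u₀ ++ [p])) (zp (w :: v')) (sgtA (m + 2)) p x y w
          (fun α a b β hα hβ => by
            refine IH α β a b ?_
            rw [hzl] at hα
            have : β.length = v'.length + 1 := by rw [hβ, zp_length]; simp
            omega)
          (fun α a b β hα hβ => by
            refine IH α β a b ?_
            rw [hzl] at hα
            have : β.length = v'.length := by rw [hβ, zp_length]; simp
            omega)
        have z1 : sgtA (m + 1 + 2) ((u₀ ++ [p]) ++ x :: y :: w :: v')
            = bsum (zp (u₀ ++ [p]) ++ (p, x) :: (x, y) :: (y, w) :: zp (w :: v'))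
                (sgtA (m + 2)) := by
          have : zp ((u₀ ++ [p]) ++ x :: y :: w :: v')
              = zp (u₀ ++ [p]) ++ (p, x) :: (x, y) :: (y, w) :: zp (w :: v') := by
            rw [zp_append_cons (u₀ ++ [p]) x (y :: w :: v'), hx1 x]
            simp [zp]
          show bsum (zp ((u₀ ++ [p]) ++ x :: y :: w :: v')) (sgtA (m + 2)) = _
          rw [this]
        have z2 : sgtA (m + 1 + 2) ((u₀ ++ [p]) ++ (y + 1) :: (x - 1) :: w :: v')
            = bsum (zp (u₀ ++ [p]) ++ (p, y + 1) :: (y + 1, x - 1) :: (x - 1, w) :: zp (w :: v'))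
                (sgtA (m + 2)) := by
          have : zp ((u₀ ++ [p]) ++ (y + 1) :: (x - 1) :: w :: v')
              = zp (u₀ ++ [p]) ++ (p, y + 1) :: (y + 1, x - 1) :: (x - 1, w) :: zp (w :: v') := by
            rw [zp_append_cons (u₀ ++ [p]) (y + 1) ((x - 1) :: w :: v'), hx1 (y + 1)]
            simp [zp]
          show bsum (zp ((u₀ ++ [p]) ++ (y + 1) :: (x - 1) :: w :: v')) (sgtA (m + 2)) = _
          rw [this]
        rw [z1, z2]
        linarith [key]

theorem B_list (P Q : List (ℤ × ℤ)) (c d : ℤ) (f : List ℤ → ℤ)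
    (h : ∀ α a b β, α.length = P.length → β.length = Q.length →
      f (α ++ a :: b :: β) = -f (α ++ (b + 1) :: (a - 1) :: β)) :
    bsum (P ++ (c, d) :: (c - 1, d - 1) :: Q) f = 0 := by
  rw [bsum_append]
  apply bsum_zero
  intro α hα
  set R : ℤ → ℤ → ℤ := fun a b => bsum Q (fun t => f (α ++ a :: b :: t)) with hRdef
  have hanti : ∀ a b, R a b = -R (b + 1) (a - 1) := by
    intro a b
    rw [hRdef]; dsimp only
    rw [← bsum_neg]
    exact bsum_congr Q fun t ht => h α a b t hα ht
  have e1 : bsum ((c, d) :: (c - 1, d - 1) :: Q) (fun v => f (α ++ v))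
      = D (c - 1) d (fun a => D (c - 2) (d - 1) (fun b => R a b)) := by
    rw [bsum_cons]
    refine D_congr fun a => ?_
    rw [bsum_cons]
    have n2 : (c : ℤ) - 1 - 1 = c - 2 := by ring
    rw [n2]
  rw [e1]
  have := Kzero (c - 1) d R hanti
  have n2 : (c : ℤ) - 1 - 1 = c - 2 := by ring
  rw [n2] at this
  exact this

theorem ofFn_getD (t : List ℤ) : List.ofFn (fun i : Fin t.length => t.getD i 0) = t := by
  apply List.ext_getElem
  · simp
  · intro i h1 h2
    simp [List.getD_eq_getElem, h2]

theorem sbox_eq_bsum : ∀ (m : ℕ) (a b : Fin m → ℤ) (f : (Fin m → ℤ) → ℤ),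
    sbox m a b f = bsum (List.ofFn (fun i => (a i, b i))) (fun t => f (fun i => t.getD i 0))
  | 0, a, b, f => by
    show f Fin.elim0 = f _
    exact congrArg f (funext fun i => i.elim0)
  | m + 1, a, b, f => by
    show ssum (a 0) (b 0) _ = bsum (List.ofFn fun i => (a i, b i)) _
    rw [List.ofFn_succ]
    show _ = ssum (a 0) (b 0) _
    refine ssum_congr fun l => ?_
    rw [sbox_eq_bsum m]
    refine bsum_congr _ fun t ht => ?_
    refine congrArg f (funext fun i => ?_)
    refine Fin.cases ?_ (fun j => ?_) i
    · simp [Fin.cons_zero]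
    · simp [Fin.cons_succ]

theorem zp_ofFn : ∀ (n : ℕ) (k : Fin (n + 2) → ℤ),
    zp (List.ofFn k) = List.ofFn (fun i : Fin (n + 1) => (k i.castSucc, k i.succ)) := by
  intro n
  induction n with
  | zero =>
    intro k
    simp [List.ofFn_succ, zp]
  | succ m IH =>
    intro k
    have e2 : List.ofFn (fun i : Fin (m + 2) => k i.succ)
        = k 1 :: List.ofFn (fun i : Fin (m + 1) => k i.succ.succ) := by
      rw [List.ofFn_succ (f := fun i : Fin (m + 2) => k i.succ)]
      simp
    rw [List.ofFn_succ (f := k), e2]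
    show (k 0, k 1) :: zp (k 1 :: List.ofFn fun i : Fin (m + 1) => k i.succ.succ) = _
    rw [← e2, IH (fun i => k i.succ)]
    rw [List.ofFn_succ (f := fun i : Fin (m + 2) => (k i.castSucc, k i.succ))]
    congr 1

theorem ofFn_getD' (N : ℕ) (t : List ℤ) (h : t.length = N) :
    List.ofFn (fun i : Fin N => t.getD i 0) = t := by
  subst h; exact ofFn_getD t

theorem sgt_eq_sgtA : ∀ (n : ℕ) (k : Fin n → ℤ), sgt n k = sgtA n (List.ofFn k)
  | 0, _ => rfl
  | 1, _ => rfl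
  | n + 2, k => by
    show sbox (n + 1) (fun i => k i.castSucc) (fun i => k i.succ) (sgt (n + 1)) = _
    rw [sbox_eq_bsum]
    have e : sgtA (n + 2) (List.ofFn k) = bsum (zp (List.ofFn k)) (sgtA (n + 1)) := rfl
    rw [e, zp_ofFn n k]
    refine bsum_congr _ fun t ht => ?_
    rw [sgt_eq_sgtA (n + 1) (fun i => t.getD i 0)]
    rw [ofFn_getD' (n + 1) t (by simpa using ht)]

theorem ofFn_split : ∀ (n : ℕ) (g : Fin (n + 2) → ℤ × ℤ) (i : Fin (n + 1)),
    ∃ P Q : List (ℤ × ℤ), P.length + Q.length + 2 = n + 2 ∧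
      List.ofFn g = P ++ g i.castSucc :: g i.succ :: Q := by
  intro n
  induction n with
  | zero =>
    intro g i
    refine ⟨[], [], rfl, ?_⟩
    fin_cases i
    simp [List.ofFn_succ]
  | succ m IH =>
    intro g i
    refine Fin.cases ?_ (fun j => ?_) i
    · refine ⟨[], List.ofFn (fun t : Fin (m + 1) => g t.succ.succ), by simp, ?_⟩
      rw [List.ofFn_succ (f := g), List.ofFn_succ (f := fun i : Fin (m + 2) => g i.succ)]
      simp
    · obtain ⟨P, Q, hl, he⟩ := IH (fun t => g t.succ) j
      refine ⟨g 0 :: P, Q, by simp only [List.length_cons]; omega, ?_⟩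
      rw [List.ofFn_succ (f := g), he]
      simp [-Fin.castSucc_succ, Fin.succ_castSucc]

/-- For every `n ≥ 2`, if `a_{i+1} = a_i - 1` and `b_{i+1} = b_i - 1` for some
`1 ≤ i ≤ n-1`, then the iterated signed sum of `sgt` over the box
`[a_1,b_1] × ⋯ × [a_n,b_n]` vanishes. -/
theorem sbox_sgt_zero (n : ℕ) (a b : Fin (n + 2) → ℤ) (i : Fin (n + 1))
    (ha : a i.succ = a i.castSucc - 1) (hb : b i.succ = b i.castSucc - 1) :
    sbox (n + 2) a b (sgt (n + 2)) = 0 := by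
  rw [sbox_eq_bsum]
  rw [bsum_congr (List.ofFn fun j => (a j, b j)) (fun t ht => by
    rw [sgt_eq_sgtA (n + 2) (fun i => t.getD i 0)]
    rw [ofFn_getD' (n + 2) t (by simpa using ht)] :
    ∀ t, _ → _ = sgtA (n + 2) t)]
  obtain ⟨P, Q, hlq, hsplit⟩ := ofFn_split n (fun j => (a j, b j)) i
  rw [hsplit, ha, hb]
  exact B_list P Q (a i.castSucc) (b i.castSucc) _
    (fun α x y β hα hβ => sgtA_swap n α β x y (by omega))
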